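/- Consider a deterministic node-oblivious decision rule vector (f, g, h) on the k-ary tree satisfying Assumptions 1, 2 and 3, with dependence graph of diameter d and constants η, τ₀, τ_d as in the assumptions; set τ* = max(τ₀, τ_d). Fix s ∈ {0,1} and for a node i at level τ define ζ_τ = min over μ ∈ M of P(σ_i = μ | s). Then there exists a constant C' = C'(f, m, k) < ∞ such that for every a ∈ ℕ ∪ {0} and every b ∈ {0, 1, …, d−1}, ζ_{τ* + a·d + b} ≥ exp( −C'·(k^d − 1)^a ); indeed the stronger bound −log ζ_{τ* + a·d + b} ≤ C'·(k^d − 1)^a − log(1/η)/(k^d − 2) holds. -/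

import Mathlib

/-!
Node-oblivious deterministic decision rules on the `k`-ary tree: every leaf applies the
same rule `g : X → M` to its private signal (i.i.d. with law `p₀` under `s = 0` and
`p₁` under `s = 1`, both everywhere positive on the finite set `X`), every internal
non-root node applies the same rule `f : Mᵏ → M` to its children's messages, and the
root applies `h : Mᵏ → Bool`.  The state of the world `s` is uniform on `{0,1}`.

We formalize the subexponential lower bound on the error probability under the three
irreducibility assumptions, in terms of the diameter `d` of the dependence graph.
-/

/-- `p` is an everywhere-positive probability distribution on the finite set `X`. -/
def IsPositiveDist {X : Type} [Fintype X] (p : X → ℝ) : Prop :=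
  (∀ x, 0 < p x) ∧ ∑ x, p x = 1

/-- Message distribution at a node of level `τ` (distance `τ` from the leaves) for the
node-oblivious deterministic rule vector with leaf rule `g` and internal rule `f`,
when the private signals are i.i.d. with law `p`. -/
noncomputable def oblDist {X M : Type} [Fintype X] [Fintype M] [DecidableEq M] {k : ℕ}
    (p : X → ℝ) (g : X → M) (f : (Fin k → M) → M) : ℕ → M → ℝ
  | 0, μ => ∑ x, if g x = μ then p x else 0
  | τ + 1, μ => ∑ σ : Fin k → M, if f σ = μ then ∏ i, oblDist p g f τ (σ i) else 0

/-- Root error probability `P(σ_root ≠ s)` (uniform prior on `s`) for the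
node-oblivious protocol `(f, g, h)`; the root's children are at level `t`, so the
total depth is `t + 1` and there are `n = k^(t+1)` private signals. -/
noncomputable def oblErr {X M : Type} [Fintype X] [Fintype M] [DecidableEq M] {k : ℕ}
    (p₀ p₁ : X → ℝ) (g : X → M) (f : (Fin k → M) → M) (h : (Fin k → M) → Bool)
    (t : ℕ) : ℝ :=
  (1 / 2) * (∑ σ : Fin k → M, if h σ = true then ∏ i, oblDist p₀ g f t (σ i) else 0) +
  (1 / 2) * (∑ σ : Fin k → M, if h σ = false then ∏ i, oblDist p₁ g f t (σ i) else 0)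

/-- The dependence graph of `f`: there is a directed edge from `μ` to `ν` iff there is
an input vector `α ∈ Mᵏ` in which `ν` appears at least once and `f α = μ`. -/
def DepEdge {M : Type} {k : ℕ} (f : (Fin k → M) → M) (μ ν : M) : Prop :=
  ∃ α : Fin k → M, (∃ i, α i = ν) ∧ f α = μ

/-- `HasPath f n μ ν`: the dependence graph of `f` contains a directed path with
exactly `n` edges from `μ` to `ν`. -/
def HasPath {M : Type} {k : ℕ} (f : (Fin k → M) → M) : ℕ → M → M → Prop
  | 0, μ, ν => μ = ν
  | n + 1, μ, ν => ∃ ξ, DepEdge f μ ξ ∧ HasPath f n ξ ν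

/-- `d` is the diameter of the dependence graph of `f`: every ordered pair of distinct
vertices is joined by a directed path of length at most `d`, and some ordered pair of
distinct vertices has no directed path of length less than `d`. -/
def IsDiameter {M : Type} {k : ℕ} (f : (Fin k → M) → M) (d : ℕ) : Prop :=
  (∀ μ ν : M, μ ≠ ν → ∃ n, n ≤ d ∧ HasPath f n μ ν) ∧
  (∃ μ ν : M, μ ≠ ν ∧ ∀ n, n < d → ¬HasPath f n μ ν)

section aux

variable {X M : Type} [Fintype X] [Fintype M] [DecidableEq M] {k : ℕ}

lemma oblDist_nonneg (p : X → ℝ) (g : X → M) (f : (Fin k → M) → M)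
    (hp : ∀ x, 0 < p x) : ∀ τ μ, 0 ≤ oblDist p g f τ μ := by
  intro τ
  induction τ with
  | zero =>
    intro μ
    rw [oblDist]
    apply Finset.sum_nonneg
    intro x _
    split
    · exact (hp x).le
    · exact le_rfl
  | succ τ ih =>
    intro μ
    rw [oblDist]
    apply Finset.sum_nonneg
    intro σ _
    split
    · exact Finset.prod_nonneg fun i _ => ih (σ i)
    · exact le_rfl

lemma oblDist_sum_one (p : X → ℝ) (g : X → M) (f : (Fin k → M) → M)
    (hp : IsPositiveDist p) : ∀ τ, ∑ μ, oblDist p g f τ μ = 1 := by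
  intro τ
  induction τ with
  | zero =>
    simp only [oblDist]
    rw [Finset.sum_comm]
    simp only [Finset.sum_ite_eq, Finset.mem_univ, if_true]
    exact hp.2
  | succ τ ih =>
    simp only [oblDist]
    rw [Finset.sum_comm]
    simp only [Finset.sum_ite_eq, Finset.mem_univ, if_true]
    have h : ∑ σ : Fin k → M, ∏ i, oblDist p g f τ (σ i)
        = ∏ _i : Fin k, ∑ ν, oblDist p g f τ ν := by
      rw [Finset.prod_univ_sum, Fintype.piFinset_univ]
    rw [h]
    simp [ih]

lemma oblDist_le_one (p : X → ℝ) (g : X → M) (f : (Fin k → M) → M)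
    (hp : IsPositiveDist p) (τ : ℕ) (μ : M) : oblDist p g f τ μ ≤ 1 := by
  rw [← oblDist_sum_one p g f hp τ]
  exact Finset.single_le_sum (fun ν _ => oblDist_nonneg p g f hp.1 τ ν) (Finset.mem_univ μ)

lemma oblDist_succ_ge (p : X → ℝ) (g : X → M) (f : (Fin k → M) → M)
    (hp : ∀ x, 0 < p x) (τ : ℕ) (μ : M) (α : Fin k → M) (hα : f α = μ) :
    ∏ i, oblDist p g f τ (α i) ≤ oblDist p g f (τ + 1) μ := by
  have hnn : ∀ σ : Fin k → M, (0:ℝ) ≤ if f σ = μ then ∏ i, oblDist p g f τ (σ i) else 0 := by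
    intro σ; split
    · exact Finset.prod_nonneg fun i _ => oblDist_nonneg p g f hp τ (σ i)
    · exact le_rfl
  have h := Finset.single_le_sum (fun σ _ => hnn σ) (Finset.mem_univ α)
  rw [if_pos hα] at h
  calc ∏ i, oblDist p g f τ (α i)
      ≤ ∑ σ : Fin k → M, if f σ = μ then ∏ i, oblDist p g f τ (σ i) else 0 := h
    _ = oblDist p g f (τ + 1) μ := by rw [oblDist]

lemma sum_pos_extract {α : Type*} [Fintype α] {f : α → ℝ} (hnn : ∀ a, 0 ≤ f a)
    (h : 0 < ∑ a, f a) : ∃ a, 0 < f a := by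
  obtain ⟨a, _, ha⟩ := Finset.exists_ne_zero_of_sum_ne_zero (ne_of_gt h)
  exact ⟨a, (hnn a).lt_of_ne (Ne.symm ha)⟩

lemma oblDist_pos_transfer (p q : X → ℝ) (g : X → M) (f : (Fin k → M) → M)
    (hp : ∀ x, 0 < p x) (hq : ∀ x, 0 < q x) :
    ∀ τ μ, 0 < oblDist p g f τ μ → 0 < oblDist q g f τ μ := by
  intro τ
  induction τ with
  | zero =>
    intro μ h
    rw [oblDist] at h ⊢
    obtain ⟨x, hx⟩ := sum_pos_extract (f := fun x => if g x = μ then p x else 0)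
      (fun x => by (try dsimp only); split; exacts [(hp x).le, le_rfl]) h
    have hgx : g x = μ := by by_contra hc; simp [hc] at hx
    refine Finset.sum_pos' (fun y _ => by split; exacts [(hq y).le, le_rfl])
      ⟨x, Finset.mem_univ x, ?_⟩
    simp only [if_pos hgx]
    exact hq x
  | succ τ ih =>
    intro μ h
    rw [oblDist] at h ⊢
    obtain ⟨σ, hσ⟩ := sum_pos_extract
      (f := fun σ : Fin k → M => if f σ = μ then ∏ i, oblDist p g f τ (σ i) else 0)
      (fun σ => by
        (try dsimp only); split
        · exact Finset.prod_nonneg fun i _ => oblDist_nonneg p g f hp τ (σ i)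
        · exact le_rfl) h
    have hfσ : f σ = μ := by by_contra hc; simp [hc] at hσ
    rw [if_pos hfσ] at hσ
    have hpos : ∀ i, 0 < oblDist p g f τ (σ i) := by
      intro i
      rcases (oblDist_nonneg p g f hp τ (σ i)).lt_or_eq with h' | h'
      · exact h'
      · exfalso
        have hz : ∏ i, oblDist p g f τ (σ i) = 0 :=
          Finset.prod_eq_zero (Finset.mem_univ i) h'.symm
        rw [hz] at hσ; exact lt_irrefl 0 hσ
    refine Finset.sum_pos' (fun σ' _ => ?_) ⟨σ, Finset.mem_univ σ, ?_⟩
    · (try dsimp only); split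
      · exact Finset.prod_nonneg fun i _ => oblDist_nonneg q g f hq τ (σ' i)
      · exact le_rfl
    · rw [if_pos hfσ]
      exact Finset.prod_pos fun i _ => ih (σ i) (hpos i)

omit [Fintype X] [Fintype M] in
lemma exists_apply_eq_of_A1 [Nonempty M] (f : (Fin k → M) → M)
    (hA1 : ∀ μ ν : M, μ ≠ ν → ∃ n, HasPath f n μ ν) (μ : M) : ∃ α, f α = μ := by
  by_cases hfc : f (fun _ => Classical.arbitrary M) = μ
  · exact ⟨_, hfc⟩
  · obtain ⟨n, hn⟩ := hA1 μ _ (fun e => hfc e.symm)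
    cases n with
    | zero =>
      have he : μ = f (fun _ => Classical.arbitrary M) := hn
      exact absurd he (fun e => hfc e.symm)
    | succ n =>
      obtain ⟨ξ, ⟨α, -, hα⟩, -⟩ := hn
      exact ⟨α, hα⟩

end aux

section zeta

variable {X M : Type} [Fintype X] [Fintype M] [DecidableEq M] {k : ℕ}

/-- min over messages of the message distribution -/
noncomputable def oblZeta [Nonempty M] (p : X → ℝ) (g : X → M) (f : (Fin k → M) → M)
    (τ : ℕ) : ℝ :=
  Finset.univ.inf' Finset.univ_nonempty (oblDist p g f τ)

lemma oblZeta_le [Nonempty M] (p : X → ℝ) (g : X → M) (f : (Fin k → M) → M)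
    (τ : ℕ) (μ : M) : oblZeta p g f τ ≤ oblDist p g f τ μ :=
  Finset.inf'_le _ (Finset.mem_univ μ)

lemma oblZeta_nonneg [Nonempty M] (p : X → ℝ) (g : X → M) (f : (Fin k → M) → M)
    (hp : ∀ x, 0 < p x) (τ : ℕ) : 0 ≤ oblZeta p g f τ :=
  Finset.le_inf' _ _ fun μ _ => oblDist_nonneg p g f hp τ μ

lemma oblZeta_pos [Nonempty M] (p : X → ℝ) (g : X → M) (f : (Fin k → M) → M)
    (τ : ℕ) (h : ∀ μ, 0 < oblDist p g f τ μ) : 0 < oblZeta p g f τ :=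
  (Finset.lt_inf'_iff _).mpr fun μ _ => h μ

lemma oblZeta_step [Nonempty M] (p : X → ℝ) (g : X → M) (f : (Fin k → M) → M)
    (hp : ∀ x, 0 < p x) (hA1 : ∀ μ ν : M, μ ≠ ν → ∃ n, HasPath f n μ ν) (τ : ℕ) :
    oblZeta p g f τ ^ k ≤ oblZeta p g f (τ + 1) := by
  apply Finset.le_inf'
  intro μ _
  obtain ⟨α, hα⟩ := exists_apply_eq_of_A1 f hA1 μ
  calc oblZeta p g f τ ^ k = ∏ _i : Fin k, oblZeta p g f τ := by
        rw [Finset.prod_const, Finset.card_univ, Fintype.card_fin]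
    _ ≤ ∏ i, oblDist p g f τ (α i) :=
        Finset.prod_le_prod (fun i _ => oblZeta_nonneg p g f hp τ)
          (fun i _ => oblZeta_le p g f τ (α i))
    _ ≤ oblDist p g f (τ + 1) μ := oblDist_succ_ge p g f hp τ μ α hα

lemma oblZeta_iter [Nonempty M] (p : X → ℝ) (g : X → M) (f : (Fin k → M) → M)
    (hp : ∀ x, 0 < p x) (hA1 : ∀ μ ν : M, μ ≠ ν → ∃ n, HasPath f n μ ν) (τ r : ℕ) :
    oblZeta p g f τ ^ (k ^ r) ≤ oblZeta p g f (τ + r) := by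
  induction r with
  | zero => simp
  | succ r ih =>
    calc oblZeta p g f τ ^ (k ^ (r + 1)) = (oblZeta p g f τ ^ (k ^ r)) ^ k := by
          rw [pow_succ, pow_mul]
      _ ≤ oblZeta p g f (τ + r) ^ k :=
          pow_le_pow_left₀ (pow_nonneg (oblZeta_nonneg p g f hp τ) _) ih k
      _ ≤ oblZeta p g f (τ + r + 1) := oblZeta_step p g f hp hA1 (τ + r)
      _ = oblZeta p g f (τ + (r + 1)) := rfl

lemma oblZeta_path [Nonempty M] (p : X → ℝ) (g : X → M) (f : (Fin k → M) → M)
    (hp : ∀ x, 0 < p x) (hk : 1 ≤ k) (hA1 : ∀ μ ν : M, μ ≠ ν → ∃ n, HasPath f n μ ν) :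
    ∀ (n : ℕ) (μ ν : M), HasPath f n μ ν → ∀ τ : ℕ,
      oblDist p g f τ ν * oblZeta p g f τ ^ (k ^ n - 1) ≤ oblDist p g f (τ + n) μ := by
  intro n
  induction n with
  | zero =>
    intro μ ν hpath τ
    have hμν : μ = ν := hpath
    subst hμν
    simp
  | succ n ih =>
    intro μ ν hpath τ
    obtain ⟨ξ, hedge, hrest⟩ := hpath
    obtain ⟨α, ⟨i₀, hi₀⟩, hα⟩ := hedge
    have hζnn := oblZeta_nonneg p g f hp τ
    have hζτn_nn := oblZeta_nonneg p g f hp (τ + n)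
    have hkn : 1 ≤ k ^ n := Nat.one_le_pow _ _ (by omega)
    have hexp : k ^ (n + 1) - 1 = (k ^ n - 1) + k ^ n * (k - 1) := by
      obtain ⟨m, rfl⟩ : ∃ m, k = m + 1 := ⟨k - 1, by omega⟩
      have h2 : (m + 1) ^ (n + 1) = (m + 1) ^ n * m + (m + 1) ^ n := by rw [pow_succ]; ring
      simp only [Nat.add_sub_cancel]
      omega
    have e1 : oblZeta p g f τ ^ (k ^ (n + 1) - 1)
        = oblZeta p g f τ ^ (k ^ n - 1) * (oblZeta p g f τ ^ (k ^ n)) ^ (k - 1) := by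
      rw [hexp, pow_add, pow_mul]
    have step1 : oblDist p g f τ ν * oblZeta p g f τ ^ (k ^ (n + 1) - 1)
        ≤ (oblDist p g f τ ν * oblZeta p g f τ ^ (k ^ n - 1))
            * oblZeta p g f (τ + n) ^ (k - 1) := by
      rw [e1, ← mul_assoc]
      apply mul_le_mul_of_nonneg_left
      · exact pow_le_pow_left₀ (pow_nonneg hζnn _) (oblZeta_iter p g f hp hA1 τ n) (k - 1)
      · exact mul_nonneg (oblDist_nonneg p g f hp τ ν) (pow_nonneg hζnn _)
    have step2 : (oblDist p g f τ ν * oblZeta p g f τ ^ (k ^ n - 1))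
            * oblZeta p g f (τ + n) ^ (k - 1)
        ≤ oblDist p g f (τ + n) ξ * oblZeta p g f (τ + n) ^ (k - 1) :=
      mul_le_mul_of_nonneg_right (ih ξ ν hrest τ) (pow_nonneg hζτn_nn _)
    have step3 : oblDist p g f (τ + n) ξ * oblZeta p g f (τ + n) ^ (k - 1)
        ≤ ∏ i, oblDist p g f (τ + n) (α i) := by
      rw [← Finset.mul_prod_erase Finset.univ _ (Finset.mem_univ i₀), hi₀]
      apply mul_le_mul_of_nonneg_left _ (oblDist_nonneg p g f hp _ ξ)
      calc oblZeta p g f (τ + n) ^ (k - 1)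
          = ∏ _i ∈ Finset.univ.erase i₀, oblZeta p g f (τ + n) := by
            rw [Finset.prod_const, Finset.card_erase_of_mem (Finset.mem_univ i₀),
              Finset.card_univ, Fintype.card_fin]
        _ ≤ ∏ i ∈ Finset.univ.erase i₀, oblDist p g f (τ + n) (α i) :=
            Finset.prod_le_prod (fun _ _ => hζτn_nn) (fun i _ => oblZeta_le p g f (τ + n) (α i))
    have step4 : ∏ i, oblDist p g f (τ + n) (α i) ≤ oblDist p g f (τ + n + 1) μ :=
      oblDist_succ_ge p g f hp (τ + n) μ α hα
    calc oblDist p g f τ ν * oblZeta p g f τ ^ (k ^ (n + 1) - 1)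
        ≤ _ := step1
      _ ≤ _ := step2
      _ ≤ _ := step3
      _ ≤ oblDist p g f (τ + n + 1) μ := step4
      _ = oblDist p g f (τ + (n + 1)) μ := rfl

end zeta

set_option maxHeartbeats 1000000 in
lemma subexp_core {X M : Type} [Fintype X] [Fintype M] [DecidableEq M]
    (k : ℕ) (hk : 2 ≤ k) (p : X → ℝ) (hp : IsPositiveDist p)
    (g : X → M) (f : (Fin k → M) → M)
    (d : ℕ) (hdiam : IsDiameter f d) (hkd : 2 < k ^ d)
    (hA1 : ∀ μ ν : M, μ ≠ ν → ∃ n, HasPath f n μ ν)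
    (τ₀ : ℕ) (hfull : ∀ μ : M, 0 < oblDist p g f τ₀ μ)
    (μs : M) (η : ℝ) (hη : 0 < η) (τd : ℕ)
    (hA3 : ∀ τ, τd < τ → η < oblDist p g f τ μs) :
    ∃ C' : ℝ, ∀ (a b : ℕ), b < d → ∀ μ : M,
      Real.exp (-C' * ((k : ℝ) ^ d - 1) ^ a) ≤ oblDist p g f (max τ₀ τd + a * d + b) μ ∧
      -Real.log (oblDist p g f (max τ₀ τd + a * d + b) μ) ≤
        C' * ((k : ℝ) ^ d - 1) ^ a - Real.log (1 / η) / ((k : ℝ) ^ d - 2) := by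
  haveI : Nonempty M := ⟨μs⟩
  have hp1 := hp.1
  have hk1 : 1 ≤ k := by omega
  have hd1 : 1 ≤ d := by
    rcases Nat.eq_zero_or_pos d with hd | hd
    · rw [hd, pow_zero] at hkd; omega
    · exact hd
  have hkd1 : 1 ≤ k ^ d := Nat.one_le_pow _ _ (by omega)
  have hpos : ∀ τ, τ₀ ≤ τ → ∀ μ, 0 < oblDist p g f τ μ := by
    intro τ hτ
    induction τ, hτ using Nat.le_induction with
    | base => exact hfull
    | succ τ hτ ih =>
      intro μ
      obtain ⟨α, hα⟩ := exists_apply_eq_of_A1 f hA1 μ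
      exact lt_of_lt_of_le (Finset.prod_pos fun i _ => ih (α i))
        (oblDist_succ_ge p g f hp1 τ μ α hα)
  have hζpos : ∀ τ, τ₀ ≤ τ → 0 < oblZeta p g f τ :=
    fun τ hτ => oblZeta_pos p g f τ (hpos τ hτ)
  have hζnn : ∀ τ : ℕ, 0 ≤ oblZeta p g f τ := fun τ => oblZeta_nonneg p g f hp1 τ
  have hle1 : ∀ τ μ, oblDist p g f τ μ ≤ 1 := fun τ μ => oblDist_le_one p g f hp τ μ
  have hζle1 : ∀ τ : ℕ, oblZeta p g f τ ≤ 1 := fun τ =>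
    le_trans (oblZeta_le p g f τ (Classical.arbitrary M)) (hle1 τ _)
  have hη1 : η < 1 := lt_of_lt_of_le (hA3 (τd + 1) (by omega)) (hle1 _ _)
  -- the window bound
  have hwin : ∀ τ, τ₀ ≤ τ → τd < τ →
      η * oblZeta p g f τ ^ (k ^ d - 1) ≤ oblZeta p g f (τ + d) := by
    intro τ hτ0 hτd
    apply Finset.le_inf'
    intro μ _
    obtain ⟨n, hnd, hpath⟩ : ∃ n, n ≤ d ∧ HasPath f n μ μs := by
      by_cases hμ : μ = μs
      · exact ⟨0, Nat.zero_le d, hμ⟩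
      · exact hdiam.1 μ μs hμ
    have hkey := oblZeta_path p g f hp1 hk1 hA1 n μ μs hpath (τ + (d - n))
    have he : τ + (d - n) + n = τ + d := by omega
    rw [he] at hkey
    refine le_trans ?_ hkey
    have h1 : η ≤ oblDist p g f (τ + (d - n)) μs := (hA3 _ (by omega)).le
    have h2 : oblZeta p g f τ ^ (k ^ d - 1) ≤ oblZeta p g f (τ + (d - n)) ^ (k ^ n - 1) := by
      have h3 : (oblZeta p g f τ ^ (k ^ (d - n))) ^ (k ^ n - 1)
          ≤ oblZeta p g f (τ + (d - n)) ^ (k ^ n - 1) :=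
        pow_le_pow_left₀ (pow_nonneg (hζnn τ) _) (oblZeta_iter p g f hp1 hA1 τ (d - n)) _
      refine le_trans ?_ h3
      rw [← pow_mul]
      apply pow_le_pow_of_le_one (hζnn τ) (hζle1 τ)
      have hkdn : k ^ (d - n) * k ^ n = k ^ d := by rw [← pow_add]; congr 1; omega
      have hkdn1 : 1 ≤ k ^ (d - n) := Nat.one_le_pow _ _ (by omega)
      have hkn1 : 1 ≤ k ^ n := Nat.one_le_pow _ _ (by omega)
      obtain ⟨m, hm⟩ : ∃ m, k ^ n = m + 1 := ⟨k ^ n - 1, by omega⟩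
      have h6 : k ^ (d - n) * (k ^ n - 1) = k ^ (d - n) * m := by rw [hm]; simp
      have h7 : k ^ (d - n) * (m + 1) = k ^ (d - n) * m + k ^ (d - n) := by ring
      rw [hm] at hkdn
      rw [h6]
      omega
    exact mul_le_mul h1 h2 (pow_nonneg (hζnn τ) _) (oblDist_nonneg p g f hp1 _ _)
  -- logarithmic bookkeeping
  set w : ℕ → ℝ := fun τ => -Real.log (oblZeta p g f τ) with hwdef
  set τs := max τ₀ τd with hτsdef
  have hτs0 : τ₀ ≤ τs := le_max_left _ _
  have hτsd : τd ≤ τs := le_max_right _ _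
  have hKr : (2 : ℝ) < (k : ℝ) ^ d := by exact_mod_cast hkd
  have hcast : ((k ^ d - 1 : ℕ) : ℝ) = (k : ℝ) ^ d - 1 := by
    rw [Nat.cast_sub hkd1]; push_cast; ring
  set c₁ := Real.log (1 / η) with hc₁def
  have hc₁η : c₁ = -Real.log η := by rw [hc₁def, one_div, Real.log_inv]
  have hc₁nn : 0 ≤ c₁ := Real.log_nonneg (by rw [le_div_iff₀ hη]; linarith)
  set c₀ := c₁ / ((k : ℝ) ^ d - 2) with hc₀def
  have hc₀nn : 0 ≤ c₀ := div_nonneg hc₁nn (by linarith)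
  have hc₀c₁ : c₀ * ((k : ℝ) ^ d - 2) = c₁ := div_mul_cancel₀ _ (by linarith)
  have hwnn : ∀ τ, τ₀ ≤ τ → 0 ≤ w τ := by
    intro τ hτ
    simp only [hwdef]
    have := Real.log_nonpos (hζnn τ) (hζle1 τ)
    linarith
  have hwiter : ∀ τ b : ℕ, τ₀ ≤ τ → w (τ + b) ≤ (k : ℝ) ^ b * w τ := by
    intro τ b hτ
    have h1 : oblZeta p g f τ ^ (k ^ b) ≤ oblZeta p g f (τ + b) :=
      oblZeta_iter p g f hp1 hA1 τ b
    have h2 : Real.log (oblZeta p g f τ ^ (k ^ b)) ≤ Real.log (oblZeta p g f (τ + b)) :=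
      Real.log_le_log (pow_pos (hζpos τ hτ) _) h1
    rw [Real.log_pow] at h2
    push_cast at h2
    simp only [hwdef]
    linarith
  have hwwin : ∀ τ, τ₀ ≤ τ → τd < τ → w (τ + d) ≤ c₁ + ((k : ℝ) ^ d - 1) * w τ := by
    intro τ hτ0 hτd
    have h1 := hwin τ hτ0 hτd
    have hζτpos := hζpos τ hτ0
    have h2 : Real.log (η * oblZeta p g f τ ^ (k ^ d - 1))
        ≤ Real.log (oblZeta p g f (τ + d)) :=
      Real.log_le_log (by positivity) h1
    rw [Real.log_mul (ne_of_gt hη) (ne_of_gt (pow_pos hζτpos _)), Real.log_pow, hcast] at h2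
    simp only [hwdef]
    rw [hc₁η]
    linarith
  set V : ℕ → ℝ := fun τ => w τ + c₀ with hVdef
  have hVwin : ∀ τ, τ₀ ≤ τ → τd < τ → V (τ + d) ≤ ((k : ℝ) ^ d - 1) * V τ := by
    intro τ h0 hd'
    have h1 := hwwin τ h0 hd'
    simp only [hVdef]
    nlinarith [hc₀c₁]
  set C₂ := max (V τs) (V (τs + d)) with hC₂def
  have hVτs_nn : 0 ≤ V τs := by
    simp only [hVdef]; have := hwnn τs hτs0; linarith
  have hC₂nn : 0 ≤ C₂ := le_trans hVτs_nn (le_max_left _ _)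
  have hKr1 : (1 : ℝ) ≤ (k : ℝ) ^ d - 1 := by linarith
  have hVa : ∀ a : ℕ, V (τs + a * d) ≤ ((k : ℝ) ^ d - 1) ^ a * C₂ := by
    intro a
    induction a with
    | zero =>
      have he0 : τs + 0 * d = τs := by omega
      rw [he0, pow_zero, one_mul, hC₂def]
      exact le_max_left _ _
    | succ a ih =>
      rcases Nat.eq_zero_or_pos a with rfl | ha
      · have h1 : V (τs + 1 * d) ≤ C₂ := by rw [one_mul]; exact le_max_right _ _
        calc V (τs + 1 * d) ≤ C₂ := h1
          _ ≤ ((k : ℝ) ^ d - 1) ^ 1 * C₂ := by rw [pow_one]; nlinarith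
      · have he : τs + (a + 1) * d = (τs + a * d) + d := by ring
        rw [he]
        have hτd' : τd < τs + a * d := by
          have := Nat.mul_le_mul ha hd1
          omega
        calc V ((τs + a * d) + d) ≤ ((k : ℝ) ^ d - 1) * V (τs + a * d) :=
              hVwin _ (by omega) hτd'
          _ ≤ ((k : ℝ) ^ d - 1) * (((k : ℝ) ^ d - 1) ^ a * C₂) :=
              mul_le_mul_of_nonneg_left ih (by linarith)
          _ = ((k : ℝ) ^ d - 1) ^ (a + 1) * C₂ := by ring
  refine ⟨(k : ℝ) ^ d * C₂, ?_⟩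
  intro a b hb μ
  have hℓ : τ₀ ≤ τs + a * d + b := by omega
  have hPpos : 0 < oblDist p g f (τs + a * d + b) μ := hpos _ hℓ μ
  have hkey : -Real.log (oblDist p g f (τs + a * d + b) μ) + c₀
      ≤ ((k : ℝ) ^ d * C₂) * (((k : ℝ) ^ d - 1) ^ a) := by
    have h1 : -Real.log (oblDist p g f (τs + a * d + b) μ) ≤ w (τs + a * d + b) := by
      have h := Real.log_le_log (hζpos _ hℓ) (oblZeta_le p g f (τs + a * d + b) μ)
      simp only [hwdef]
      linarith
    have h2 : w (τs + a * d + b) ≤ (k : ℝ) ^ b * w (τs + a * d) := by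
      have := hwiter (τs + a * d) b (by omega)
      simpa using this
    have hwnn' : 0 ≤ w (τs + a * d) := hwnn _ (by omega)
    have h3 : (k : ℝ) ^ b * w (τs + a * d) ≤ (k : ℝ) ^ d * w (τs + a * d) := by
      apply mul_le_mul_of_nonneg_right _ hwnn'
      apply pow_le_pow_right₀ (by exact_mod_cast hk1) hb.le
    have h1k : (1 : ℝ) ≤ (k : ℝ) ^ d := by linarith
    have h4 : (k : ℝ) ^ d * w (τs + a * d) + c₀ ≤ (k : ℝ) ^ d * V (τs + a * d) := by
      simp only [hVdef]
      nlinarith [hc₀nn]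
    have h5 : (k : ℝ) ^ d * V (τs + a * d)
        ≤ (k : ℝ) ^ d * (((k : ℝ) ^ d - 1) ^ a * C₂) :=
      mul_le_mul_of_nonneg_left (hVa a) (by linarith)
    nlinarith [h1, h2, h3, h4, h5]
  constructor
  · have hlog : -(((k : ℝ) ^ d * C₂) * (((k : ℝ) ^ d - 1) ^ a))
        ≤ Real.log (oblDist p g f (τs + a * d + b) μ) := by linarith [hkey, hc₀nn]
    calc Real.exp (-((k : ℝ) ^ d * C₂) * (((k : ℝ) ^ d - 1) ^ a))
        = Real.exp (-(((k : ℝ) ^ d * C₂) * (((k : ℝ) ^ d - 1) ^ a))) := by rw [neg_mul]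
      _ ≤ Real.exp (Real.log (oblDist p g f (τs + a * d + b) μ)) := Real.exp_le_exp.mpr hlog
      _ ≤ oblDist p g f (τs + a * d + b) μ := le_of_eq (Real.exp_log hPpos)
  · linarith [hkey]

/-- **Subexponential decay of the least-frequent message probability
(Lemma `subexp_decay`).**  Consider a deterministic node-oblivious rule vector
`(f, g, h)` satisfying the three irreducibility assumptions, with dependence graph of
diameter `d` (and `k^d > 2`), constants `η > 0`, `τ₀`, `τ_d` as in the assumptions,
and set `τ* = max τ₀ τ_d`.  Fix `s ∈ {0,1}` and let
`ζ_τ = min_{μ ∈ M} P(σ_i = μ | s)` for a node `i` at level `τ`.  Then there is a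
constant `C' = C'(f, m, k) < ∞` such that for every `a ∈ ℕ` and `b ∈ {0, …, d-1}`,
`ζ_{τ* + a d + b} ≥ exp (-C' (k^d - 1)^a)`; indeed the stronger bound
`-log ζ_{τ* + a d + b} ≤ C' (k^d - 1)^a - log (1/η) / (k^d - 2)` holds.
(Both bounds are stated for every message `μ`, which is equivalent to stating them
for the minimum `ζ`.) -/
theorem least_frequent_message_subexponential_decay
    (X M : Type) [Fintype X] [Fintype M] [DecidableEq M]
    (k : ℕ) (hk : 2 ≤ k)
    (p₀ p₁ : X → ℝ) (hp₀ : IsPositiveDist p₀) (hp₁ : IsPositiveDist p₁)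
    (g : X → M) (f : (Fin k → M) → M) (h : (Fin k → M) → Bool)
    (d : ℕ) (hdiam : IsDiameter f d) (hkd : 2 < k ^ d)
    (hA1 : ∀ μ ν : M, μ ≠ ν → ∃ n, HasPath f n μ ν)
    (τ₀ : ℕ) (hτ₀ : 0 < τ₀) (hA2 : ∀ μ : M, 0 < oblDist p₀ g f τ₀ μ)
    (μm μp : M) (η : ℝ) (hη : 0 < η) (τd : ℕ)
    (hA3 : ∀ τ, τd < τ → η < oblDist p₀ g f τ μm ∧ η < oblDist p₁ g f τ μp)
    (s : Bool) :
    ∃ C' : ℝ, ∀ (a b : ℕ), b < d → ∀ μ : M,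
      Real.exp (-C' * ((k : ℝ) ^ d - 1) ^ a) ≤
        oblDist (if s then p₁ else p₀) g f (max τ₀ τd + a * d + b) μ ∧
      -Real.log (oblDist (if s then p₁ else p₀) g f (max τ₀ τd + a * d + b) μ) ≤
        C' * ((k : ℝ) ^ d - 1) ^ a - Real.log (1 / η) / ((k : ℝ) ^ d - 2) := by
  cases s with
  | false =>
    exact subexp_core k hk p₀ hp₀ g f d hdiam hkd hA1 τ₀ hA2 μm η hη τd
      (fun τ hτ => (hA3 τ hτ).1)
  | true =>
    exact subexp_core k hk p₁ hp₁ g f d hdiam hkd hA1 τ₀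
      (fun μ => oblDist_pos_transfer p₀ p₁ g f hp₀.1 hp₁.1 τ₀ μ (hA2 μ)) μp η hη τd
      (fun τ hτ => (hA3 τ hτ).2)
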